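/- Borel's growth lemma: Let φ : [r₀, ∞) → [0, ∞) be a monotone increasing differentiable function with φ(r₀) ≥ 1, and let δ > 0. Then the set of r ≥ r₀ at which φ'(r) > φ(r)^{1+δ} has finite Lebesgue measure. -/

import Mathlib

open MeasureTheory

lemma aux_deriv_nonneg {r₀ : ℝ} {φ : ℝ → ℝ} (hmono : MonotoneOn φ (Set.Ici r₀))
    {x : ℝ} (hx : r₀ < x) (hd : DifferentiableAt ℝ φ x) : 0 ≤ deriv φ x := by
  have hslope : Filter.Tendsto (slope φ x) (nhdsWithin x (Set.Ioi x)) (nhds (deriv φ x)) :=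
    (hasDerivAt_iff_tendsto_slope.1 hd.hasDerivAt).mono_left
      (nhdsWithin_mono x (by intro y hy; exact ne_of_gt hy))
  refine ge_of_tendsto hslope ?_
  filter_upwards [self_mem_nhdsWithin] with y hy
  have hy' : x < y := hy
  have : φ x ≤ φ y := hmono (le_of_lt hx) (le_of_lt (hx.trans hy')) hy'.le
  rw [slope_def_field]
  exact div_nonneg (by linarith) (by linarith)

/-- Borel's growth lemma: if `φ : [r₀, ∞) → [1, ∞)` is monotone increasing and
differentiable, and `δ > 0`, then the set of `r ≥ r₀` at which
`φ'(r) > φ(r)^(1+δ)` has finite Lebesgue measure. -/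
theorem borel_growth_lemma (r₀ : ℝ) (φ : ℝ → ℝ)
    (hmono : MonotoneOn φ (Set.Ici r₀))
    (hdiff : ∀ r ∈ Set.Ici r₀, DifferentiableAt ℝ φ r)
    (hone : ∀ r ∈ Set.Ici r₀, 1 ≤ φ r)
    (δ : ℝ) (hδ : 0 < δ) :
    volume {r : ℝ | r₀ ≤ r ∧ (φ r) ^ (1 + δ) < deriv φ r} < ⊤ := by
  set E : Set ℝ := {r : ℝ | r₀ ≤ r ∧ (φ r) ^ (1 + δ) < deriv φ r} with hEdef
  have hpos : ∀ r ∈ Set.Ici r₀, (0:ℝ) < φ r := fun r hr => lt_of_lt_of_le one_pos (hone r hr)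
  -- measurability of E
  have hcont2 : Continuous (fun r : ℝ => φ (max r r₀)) := by
    rw [continuous_iff_continuousAt]
    intro r
    have h1 : ContinuousAt (fun r : ℝ => max r r₀) r :=
      (continuous_id.max continuous_const).continuousAt
    exact ContinuousAt.comp (g := φ) (f := fun r : ℝ => max r r₀) (x := r)
      ((hdiff _ (le_max_right r r₀)).continuousAt) h1
  have hEmeas : MeasurableSet E := by
    have hE' : E = Set.Ici r₀ ∩ {r | (φ (max r r₀)) ^ (1 + δ) < deriv φ r} := by
      ext r
      simp only [hEdef, Set.mem_inter_iff, Set.mem_setOf_eq, Set.mem_Ici]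
      constructor
      · rintro ⟨h1, h2⟩; exact ⟨h1, by rwa [max_eq_left h1]⟩
      · rintro ⟨h1, h2⟩; exact ⟨h1, by rwa [max_eq_left h1] at h2⟩
    rw [hE']
    have hc3 : Continuous (fun r : ℝ => (φ (max r r₀)) ^ (1 + δ)) :=
      hcont2.rpow_const (fun x => Or.inl (ne_of_gt (hpos _ (le_max_right x r₀))))
    exact measurableSet_Ici.inter
      (measurableSet_lt hc3.measurable (measurable_deriv φ))
  -- the auxiliary function ψ and its derivative
  set ψ : ℝ → ℝ := fun r => -(1/δ) * (φ r) ^ (-δ) with hψdef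
  have hψderiv : ∀ x ∈ Set.Ici r₀, HasDerivAt ψ ((φ x) ^ (-(1+δ)) * deriv φ x) x := by
    intro x hx
    have h1 : HasDerivAt (fun r => (φ r) ^ (-δ)) (deriv φ x * (-δ) * (φ x) ^ (-δ - 1)) x :=
      ((hdiff x hx).hasDerivAt).rpow_const (Or.inl (ne_of_gt (hpos x hx)))
    have h2 := h1.const_mul (-(1/δ))
    refine h2.congr_deriv ?_
    have : -δ - 1 = -(1+δ) := by ring
    rw [this]
    field_simp
  -- main finite-interval bound
  have hmain : ∀ R : ℝ, volume (E ∩ Set.Ioc r₀ R) ≤ ENNReal.ofReal (1/δ) := by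
    intro R
    rcases le_or_gt R r₀ with hR | hR
    · rw [Set.Ioc_eq_empty (by exact not_lt.mpr hR), Set.inter_empty, measure_empty]
      exact zero_le
    have hRR : r₀ ≤ R := hR.le
    -- the indicator function
    set χ : ℝ → ℝ := E.indicator (fun _ => (1:ℝ)) with hχdef
    have hχint : IntegrableOn χ (Set.Icc r₀ R) volume := by
      apply Integrable.indicator _ hEmeas
      exact integrableOn_const measure_Icc_lt_top.ne
    have hkey : (∫ y in r₀..R, χ y) ≤ ψ R - ψ r₀ := by
      apply intervalIntegral.integral_le_sub_of_hasDeriv_right_of_le hRR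
      · intro x hx
        exact ((hψderiv x (Set.mem_Icc.1 hx).1).differentiableAt.continuousAt).continuousWithinAt
      · intro x hx
        exact (hψderiv x (le_of_lt (Set.mem_Ioo.1 hx).1)).hasDerivWithinAt
      · exact hχint
      · intro x hx
        obtain ⟨hx1, hx2⟩ := Set.mem_Ioo.1 hx
        by_cases hxE : x ∈ E
        · rw [hχdef, Set.indicator_of_mem hxE]
          have hd : (φ x) ^ (1 + δ) < deriv φ x := hxE.2
          have hp : (0:ℝ) < (φ x) ^ (-(1+δ)) := Real.rpow_pos_of_pos (hpos x hx1.le) _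
          have : (φ x) ^ (-(1+δ)) * (φ x) ^ (1 + δ) < (φ x) ^ (-(1+δ)) * deriv φ x :=
            mul_lt_mul_of_pos_left hd hp
          rw [← Real.rpow_add (hpos x hx1.le), neg_add_cancel, Real.rpow_zero] at this
          exact this.le
        · rw [hχdef, Set.indicator_of_notMem hxE]
          exact mul_nonneg (Real.rpow_nonneg (hpos x hx1.le).le _)
            (aux_deriv_nonneg hmono hx1 (hdiff x hx1.le))
    have hvol : (∫ y in r₀..R, χ y) = (volume (E ∩ Set.Ioc r₀ R)).toReal := by
      rw [intervalIntegral.integral_of_le hRR, hχdef,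
        MeasureTheory.integral_indicator_const _ hEmeas, measureReal_def, Measure.restrict_apply hEmeas,
        smul_eq_mul, mul_one]
    have hψbound : ψ R - ψ r₀ ≤ 1/δ := by
      have h1 : ψ R ≤ 0 := by
        rw [hψdef]
        simp only
        apply mul_nonpos_of_nonpos_of_nonneg
        · have h0 : (0:ℝ) < 1/δ := by positivity
          linarith
        · exact Real.rpow_nonneg (hpos R (hRR.trans' le_rfl)).le _
      have h2 : -(1/δ) ≤ ψ r₀ := by
        rw [hψdef]
        simp only
        have hle1 : (φ r₀) ^ (-δ) ≤ 1 :=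
          Real.rpow_le_one_of_one_le_of_nonpos (hone r₀ Set.self_mem_Ici) (by linarith)
        nlinarith [one_div_pos.2 hδ]
      linarith
    have hfin : volume (E ∩ Set.Ioc r₀ R) ≠ ⊤ :=
      (lt_of_le_of_lt (measure_mono Set.inter_subset_right) measure_Ioc_lt_top).ne
    calc volume (E ∩ Set.Ioc r₀ R)
        = ENNReal.ofReal ((volume (E ∩ Set.Ioc r₀ R)).toReal) := (ENNReal.ofReal_toReal hfin).symm
      _ ≤ ENNReal.ofReal (1/δ) := ENNReal.ofReal_le_ofReal (by rw [← hvol]; linarith)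
  -- cover E by a countable union
  have hcover : E ⊆ {r₀} ∪ ⋃ n : ℕ, (E ∩ Set.Ioc r₀ (r₀ + n)) := by
    intro r hr
    rcases eq_or_lt_of_le hr.1 with h | h
    · exact Or.inl (by simp [← h])
    · obtain ⟨n, hn⟩ := exists_nat_ge (r - r₀)
      exact Or.inr (Set.mem_iUnion.2 ⟨n, hr, Set.mem_Ioc.2 ⟨h, by linarith⟩⟩)
  have hunion : volume (⋃ n : ℕ, (E ∩ Set.Ioc r₀ (r₀ + n))) ≤ ENNReal.ofReal (1/δ) := by
    rw [Directed.measure_iUnion]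
    · exact iSup_le fun n => hmain _
    · refine Monotone.directed_le fun m n hmn => ?_
      have hc : (m:ℝ) ≤ n := Nat.cast_le.2 hmn
      exact Set.inter_subset_inter_right _ (Set.Ioc_subset_Ioc_right (by linarith))
  calc volume E ≤ volume ({r₀} ∪ ⋃ n : ℕ, (E ∩ Set.Ioc r₀ (r₀ + n))) := measure_mono hcover
    _ ≤ volume ({r₀} : Set ℝ) + volume (⋃ n : ℕ, (E ∩ Set.Ioc r₀ (r₀ + n))) := measure_union_le _ _
    _ ≤ 0 + ENNReal.ofReal (1/δ) := by
        rw [Real.volume_singleton]; exact add_le_add le_rfl hunion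
    _ < ⊤ := by simp [ENNReal.ofReal_lt_top]
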